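/- For every a ∈ ℂ \ ℝ_{≤0} and all n, k ∈ ℕ with n ≥ k, β_{n,k}(a) = α_{n,1}(a) · L_k(−2a). -/

import Mathlib

open MeasureTheory Set
open scoped ENNReal

/-- The Laguerre polynomial `L_n(x) = ∑_{k=0}^n C(n, n-k) (-x)^k / k!`. -/
noncomputable def lagL (n : ℕ) (x : ℝ) : ℝ :=
  ∑ k ∈ Finset.range (n + 1), (n.choose (n - k) : ℝ) * (-x) ^ k / (Nat.factorial k : ℝ)

/-- The Laguerre function `φ_n(x) = e^{-x} L_n(2x)`. -/
noncomputable def lagPhi (n : ℕ) (x : ℝ) : ℝ := Real.exp (-x) * lagL n (2 * x)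

/-- `α_{n,k}(a) = ∫₀^∞ e^{-ξ} (a+ξ)^{-k} φ_n(ξ) dξ`. -/
noncomputable def lagAlpha (n k : ℕ) (a : ℂ) : ℂ :=
  ∫ ξ in Ioi (0:ℝ), Complex.exp (-(ξ:ℂ)) / (a + (ξ:ℂ)) ^ k * (lagPhi n ξ : ℂ)

/-- The Laguerre polynomial `L_n` over `ℂ`. -/
noncomputable def lagLc (n : ℕ) (x : ℂ) : ℂ :=
  ∑ k ∈ Finset.range (n + 1), (n.choose (n - k) : ℂ) * (-x) ^ k / (Nat.factorial k : ℂ)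

/-- `β_{n,k}(a) = ∫₀^∞ φ_n(x) φ_k(x) / (a + x) dx`. -/
noncomputable def lagBeta (n k : ℕ) (a : ℂ) : ℂ :=
  ∫ x in Ioi (0:ℝ), (lagPhi n x : ℂ) * (lagPhi k x : ℂ) / (a + (x:ℂ))

-- auxiliary lemmas
lemma inner_alt (n p : ℕ) (h : p < n) :
    ∑ i ∈ Finset.range (n+1), (-1:ℤ)^i * n.choose i * i.choose p = 0 := by
  have hp : p ≤ n + 1 := by omega
  rw [Finset.range_eq_Ico, ← Finset.sum_Ico_consecutive _ (Nat.zero_le p) hp]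
  have h1 : ∑ i ∈ Finset.Ico 0 p, (-1:ℤ)^i * n.choose i * i.choose p = 0 := by
    apply Finset.sum_eq_zero
    intro i hi
    simp [Nat.choose_eq_zero_of_lt (Finset.mem_Ico.1 hi).2]
  rw [h1, zero_add, Finset.sum_Ico_eq_sum_range]
  have h2 : ∀ t ∈ Finset.range (n + 1 - p), (-1:ℤ)^(p+t) * n.choose (p+t) * (p+t).choose p
      = ((-1:ℤ)^p * n.choose p) * ((-1:ℤ)^t * (n-p).choose t) := by
    intro t ht
    have htn : p + t ≤ n := by
      have := Finset.mem_range.1 ht; omega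
    have := Nat.choose_mul (n := n) (k := p + t) (s := p) (Nat.le_add_right _ _)
    have hc : (n.choose (p+t) * (p+t).choose p : ℤ) = n.choose p * (n-p).choose t := by
      rw [Nat.add_sub_cancel_left] at this
      exact_mod_cast this
    rw [pow_add]
    push_cast at hc ⊢
    linear_combination ((-1:ℤ)^p*(-1)^t) * hc
  rw [Finset.sum_congr rfl h2, ← Finset.mul_sum]
  have hnp : n - p ≠ 0 := by omega
  have h3 : n + 1 - p = (n - p) + 1 := by omega
  rw [h3, Int.alternating_sum_range_choose_of_ne hnp, mul_zero]

lemma alt_sum (n j : ℕ) (h : j < n) :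
    ∑ i ∈ Finset.range (n+1), (-1:ℤ)^i * n.choose i * (i+j).choose j = 0 := by
  have h1 : ∀ i ∈ Finset.range (n+1), (-1:ℤ)^i * n.choose i * (i+j).choose j
      = ∑ pq ∈ Finset.HasAntidiagonal.antidiagonal j, (j.choose pq.2 : ℤ) * ((-1:ℤ)^i * n.choose i * i.choose pq.1) := by
    intro i _
    rw [Nat.add_choose_eq]
    push_cast
    rw [Finset.mul_sum]
    apply Finset.sum_congr rfl
    intro pq _
    ring
  rw [Finset.sum_congr rfl h1, Finset.sum_comm]
  apply Finset.sum_eq_zero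
  intro pq hpq
  have hp : pq.1 ≤ j := by
    have := Finset.HasAntidiagonal.mem_antidiagonal.mp hpq
    omega
  rw [← Finset.mul_sum, inner_alt n pq.1 (lt_of_le_of_lt hp h), mul_zero]

lemma intOn_pow_exp (m : ℕ) :
    IntegrableOn (fun x : ℝ => x ^ m * Real.exp (-(2*x))) (Ioi 0) := by
  have h := integrableOn_rpow_mul_exp_neg_mul_rpow (s := m) (p := 1) (b := 2)
    (lt_of_lt_of_le neg_one_lt_zero (Nat.cast_nonneg m)) zero_lt_one (by norm_num)
  refine h.congr_fun (fun x hx => ?_) measurableSet_Ioi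
  dsimp only
  rw [Real.rpow_one, Real.rpow_natCast, neg_mul]

lemma integral_pow_exp (m : ℕ) :
    ∫ x in Ioi (0:ℝ), x ^ m * Real.exp (-(2*x)) = m.factorial / 2^(m+1) := by
  have h := Real.integral_rpow_mul_exp_neg_mul_Ioi (a := (m:ℝ)+1) (r := 2)
    (by positivity) (by norm_num)
  rw [add_sub_cancel_right] at h
  simp_rw [Real.rpow_natCast] at h
  rw [h, Real.Gamma_nat_eq_factorial]
  rw [show ((m:ℝ)+1) = ((m+1 : ℕ) : ℝ) by push_cast; ring, Real.rpow_natCast]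
  rw [div_pow, one_pow, div_mul_eq_mul_div, one_mul]

lemma orth (n j : ℕ) (hjn : j < n) :
    ∫ x in Ioi (0:ℝ), lagL n (2*x) * x^j * Real.exp (-(2*x)) = 0 := by
  have hpt : ∀ x : ℝ, lagL n (2*x) * x^j * Real.exp (-(2*x))
      = ∑ i ∈ Finset.range (n+1),
          ((n.choose (n-i) : ℝ) * (-2)^i / (i.factorial : ℝ)) * (x^(i+j) * Real.exp (-(2*x))) := by
    intro x
    rw [lagL, Finset.sum_mul, Finset.sum_mul]
    apply Finset.sum_congr rfl
    intro i _
    have h1 : (-(2*x) : ℝ)^i = (-2)^i * x^i := by rw [← neg_mul, mul_pow]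
    rw [h1, pow_add]
    ring
  rw [setIntegral_congr_fun measurableSet_Ioi (fun x _ => hpt x)]
  rw [integral_finset_sum _ (fun i _ => ((intOn_pow_exp (i+j)).const_mul _))]
  simp_rw [MeasureTheory.integral_const_mul, integral_pow_exp]
  have key : ∀ i ∈ Finset.range (n+1),
      ((n.choose (n-i) : ℝ) * (-2)^i / (i.factorial : ℝ)) * ((i+j).factorial / 2^(i+j+1))
      = ((j.factorial : ℝ)/2^(j+1)) * (((-1:ℤ)^i * n.choose i * (i+j).choose j : ℤ) : ℝ) := by
    intro i hi
    have hin : i ≤ n := Nat.lt_succ_iff.mp (Finset.mem_range.mp hi)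
    have hsym : n.choose (n - i) = n.choose i := Nat.choose_symm hin
    have hfac : ((i+j).factorial : ℝ) = (i+j).choose j * j.factorial * i.factorial := by
      have h2 := Nat.choose_mul_factorial_mul_factorial (Nat.le_add_left j i)
      rw [Nat.add_sub_cancel] at h2
      exact_mod_cast h2.symm
    have h3 : ((-2:ℝ))^i = (-1)^i * 2^i := by rw [← neg_one_mul, mul_pow]
    rw [hsym, hfac, h3]
    have hi0 : (i.factorial : ℝ) ≠ 0 := Nat.cast_ne_zero.mpr (Nat.factorial_ne_zero i)
    push_cast
    field_simp
    ring
  rw [Finset.sum_congr rfl key, ← Finset.mul_sum]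
  have h4 : ∑ i ∈ Finset.range (n+1), (((-1:ℤ)^i * n.choose i * (i+j).choose j : ℤ) : ℝ)
      = ((∑ i ∈ Finset.range (n+1), (-1:ℤ)^i * n.choose i * (i+j).choose j : ℤ) : ℝ) := by
    push_cast
    rfl
  rw [h4, alt_sum n j hjn]
  simp



noncomputable def lagP (k : ℕ) : Polynomial ℂ :=
  ∑ i ∈ Finset.range (k+1),
    Polynomial.C ((k.choose (k-i) : ℂ) * (-2)^i / (Nat.factorial i : ℂ)) * Polynomial.X ^ i

lemma lagP_eval (k : ℕ) (x : ℂ) : (lagP k).eval x = lagLc k (2 * x) := by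
  unfold lagP lagLc
  rw [Polynomial.eval_finset_sum]
  apply Finset.sum_congr rfl
  intro i _
  have h1 : (-(2*x) : ℂ)^i = (-2)^i * x^i := by rw [← neg_mul, mul_pow]
  simp [h1]
  ring

noncomputable def lagPR (n : ℕ) : Polynomial ℝ :=
  ∑ i ∈ Finset.range (n+1),
    Polynomial.C ((n.choose (n-i) : ℝ) * (-2)^i / (Nat.factorial i : ℝ)) * Polynomial.X ^ i

lemma lagPR_eval (n : ℕ) (x : ℝ) : (lagPR n).eval x = lagL n (2 * x) := by
  unfold lagPR lagL
  rw [Polynomial.eval_finset_sum]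
  apply Finset.sum_congr rfl
  intro i _
  have h1 : (-(2*x) : ℝ)^i = (-2)^i * x^i := by rw [← neg_mul, mul_pow]
  simp [h1]
  ring

lemma lagP_natDegree (k : ℕ) : (lagP k).natDegree ≤ k := by
  apply Polynomial.natDegree_sum_le_of_forall_le
  intro i hi
  exact (Polynomial.natDegree_C_mul_X_pow_le _ _).trans
    (Nat.lt_succ_iff.mp (Finset.mem_range.mp hi))

lemma lagL_cast (n : ℕ) (y : ℝ) : ((lagL n y : ℝ) : ℂ) = lagLc n (y : ℂ) := by
  unfold lagL lagLc
  push_cast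
  rfl

/-- complex Laguerre-type polynomial -/

lemma lower_bound (a : ℂ) (ha : ∀ x : ℝ, x ≤ 0 → a ≠ (x : ℂ)) :
    ∃ ε > (0:ℝ), ∀ x : ℝ, 0 ≤ x → ε ≤ ‖a + x‖ := by
  by_cases him : a.im = 0
  · have hre : 0 < a.re := by
      by_contra hc
      push_neg at hc
      exact ha a.re hc (Complex.ext (by simp) (by simp [him]))
    refine ⟨a.re, hre, fun x hx => ?_⟩
    calc a.re ≤ a.re + x := le_add_of_nonneg_right hx
      _ ≤ |(a + x).re| := by
          rw [Complex.add_re, Complex.ofReal_re]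
          exact le_abs_self _
      _ ≤ ‖a + x‖ := Complex.abs_re_le_norm _
  · refine ⟨|a.im|, abs_pos.mpr him, fun x hx => ?_⟩
    calc |a.im| = |(a + x).im| := by rw [Complex.add_im, Complex.ofReal_im, add_zero]
      _ ≤ ‖a + x‖ := Complex.abs_im_le_norm _

lemma a_add_ne (a : ℂ) (ha : ∀ x : ℝ, x ≤ 0 → a ≠ (x : ℂ)) (x : ℝ) (hx : 0 < x) :
    a + (x:ℂ) ≠ 0 := by
  intro h
  have : a = ((-x : ℝ) : ℂ) := by
    push_cast
    linear_combination h
  exact ha (-x) (by linarith) this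

lemma int_poly_exp (P : Polynomial ℝ) :
    IntegrableOn (fun x : ℝ => P.eval x * Real.exp (-(2*x))) (Ioi 0) := by
  have h : IntegrableOn (fun x : ℝ => ∑ i ∈ Finset.range (P.natDegree + 1),
      P.coeff i * (x ^ i * Real.exp (-(2*x)))) (Ioi 0) :=
    integrable_finset_sum _ (fun i _ => (intOn_pow_exp i).const_mul _)
  refine h.congr_fun (fun x _ => ?_) measurableSet_Ioi
  rw [Polynomial.eval_eq_sum_range, Finset.sum_mul]
  apply Finset.sum_congr rfl
  intro i _
  ring

lemma int_poly_exp_div (a : ℂ) (ha : ∀ x : ℝ, x ≤ 0 → a ≠ (x : ℂ)) (P : Polynomial ℝ) :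
    IntegrableOn (fun x : ℝ => ((P.eval x * Real.exp (-(2*x)) : ℝ) : ℂ) / (a + (x:ℂ)))
      (Ioi 0) := by
  obtain ⟨ε, hε, hεb⟩ := lower_bound a ha
  have h0 : IntegrableOn (fun x : ℝ => ((P.eval x * Real.exp (-(2*x)) : ℝ) : ℂ)) (Ioi 0) :=
    (int_poly_exp P).ofReal
  have hm : AEStronglyMeasurable (fun x : ℝ => (a + (x:ℂ))⁻¹)
      (volume.restrict (Ioi (0:ℝ))) := by
    apply Measurable.aestronglyMeasurable
    exact (Complex.measurable_ofReal.const_add a).inv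
  have hb : ∀ᵐ (x : ℝ) ∂(volume.restrict (Ioi (0:ℝ))), ‖(a + (x:ℂ))⁻¹‖ ≤ ε⁻¹ := by
    filter_upwards [self_mem_ae_restrict measurableSet_Ioi] with x hx
    rw [norm_inv]
    exact inv_anti₀ hε (hεb x (le_of_lt hx))
  have h2 : IntegrableOn
      (fun x : ℝ => (a + (x:ℂ))⁻¹ * ((P.eval x * Real.exp (-(2*x)) : ℝ) : ℂ)) (Ioi 0) :=
    h0.bdd_mul hm hb
  refine h2.congr_fun (fun x _ => ?_) measurableSet_Ioi
  rw [div_eq_mul_inv, mul_comm]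

lemma exp2 (x : ℝ) : Real.exp (-(2*x)) = Real.exp (-x) * Real.exp (-x) := by
  rw [← Real.exp_add]; ring_nf

lemma cexp (x : ℝ) : Complex.exp (-(x:ℂ)) = ((Real.exp (-x) : ℝ) : ℂ) := by
  rw [Complex.ofReal_exp, Complex.ofReal_neg]

theorem lagBeta_eq_lagAlpha_mul (a : ℂ) (ha : ∀ x : ℝ, x ≤ 0 → a ≠ (x : ℂ))
    (n k : ℕ) (hkn : k ≤ n) :
    lagBeta n k a = lagAlpha n 1 a * lagLc k (-2 * a) := by
  by_cases hk : k = 0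
  · subst hk
    have hL0 : lagLc 0 (-2 * a) = 1 := by simp [lagLc]
    rw [hL0, mul_one]
    unfold lagBeta lagAlpha
    apply setIntegral_congr_fun measurableSet_Ioi
    intro x _
    dsimp only
    have h0 : lagPhi 0 x = Real.exp (-x) := by
      simp [lagPhi, lagL]
    rw [h0, pow_one, cexp]
    push_cast [lagPhi]
    ring
  · have hn : 1 ≤ n := le_trans (Nat.one_le_iff_ne_zero.mpr hk) hkn
    obtain ⟨q, hq⟩ := Polynomial.X_sub_C_dvd_sub_C_eval (a := -a) (p := lagP k)
    have hc : (lagP k).eval (-a) = lagLc k (-2 * a) := by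
      rw [lagP_eval, show (2:ℂ) * (-a) = -2 * a by ring]
    have hqdeg : q.natDegree < n := by
      by_cases hq0 : q = 0
      · simp only [hq0, Polynomial.natDegree_zero]
        omega
      · have h1 : ((Polynomial.X - Polynomial.C (-a)) * q).natDegree = 1 + q.natDegree := by
          rw [Polynomial.natDegree_mul (Polynomial.X_sub_C_ne_zero (-a)) hq0,
            Polynomial.natDegree_X_sub_C]
        have h2 : (lagP k - Polynomial.C ((lagP k).eval (-a))).natDegree ≤ k := by
          refine (Polynomial.natDegree_sub_le _ _).trans ?_
          exact max_le (lagP_natDegree k) (by simp)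
        rw [hq, h1] at h2
        omega
    -- key pointwise identity
    have key : ∀ x ∈ Ioi (0:ℝ),
        (lagPhi n x : ℂ) * (lagPhi k x : ℂ) / (a + (x:ℂ))
          - Complex.exp (-(x:ℂ)) / (a + (x:ℂ)) ^ 1 * (lagPhi n x : ℂ) * lagLc k (-2 * a)
        = ∑ j ∈ Finset.range n,
            q.coeff j * ((lagL n (2*x) * x^j * Real.exp (-(2*x)) : ℝ) : ℂ) := by
      intro x hx
      have hx0 : (0:ℝ) < x := hx
      have hax : a + (x:ℂ) ≠ 0 := a_add_ne a ha x hx0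
      have heval : lagLc k (2*(x:ℂ)) - lagLc k (-2 * a) = ((x:ℂ) + a) * q.eval (x:ℂ) := by
        have h3 := congrArg (Polynomial.eval (x:ℂ)) hq
        simp only [Polynomial.eval_sub, Polynomial.eval_C, Polynomial.eval_mul,
          Polynomial.eval_X, lagP_eval, hc, sub_neg_eq_add] at h3
        exact h3
      have hqe : q.eval (x:ℂ) = ∑ j ∈ Finset.range n, q.coeff j * (x:ℂ)^j :=
        Polynomial.eval_eq_sum_range' hqdeg _
      have hLn : ((lagL n (2*x) : ℝ) : ℂ) = lagLc n (2*(x:ℂ)) := by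
        rw [lagL_cast]; push_cast; ring_nf
      have hLk : ((lagL k (2*x) : ℝ) : ℂ) = lagLc k (2*(x:ℂ)) := by
        rw [lagL_cast]; push_cast; ring_nf
      have hgoal : (lagPhi n x : ℂ) * (lagPhi k x : ℂ) / (a + (x:ℂ))
          - Complex.exp (-(x:ℂ)) / (a + (x:ℂ)) ^ 1 * (lagPhi n x : ℂ) * lagLc k (-2 * a)
          = ((lagL n (2*x) * Real.exp (-(2*x)) : ℝ) : ℂ) * q.eval (x:ℂ) := by
        unfold lagPhi
        rw [pow_one]
        push_cast
        rw [hLn, hLk]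
        have cexp2 : Complex.exp (-(2*(x:ℂ))) = Complex.exp (-(x:ℂ)) * Complex.exp (-(x:ℂ)) := by
          rw [← Complex.exp_add]; ring_nf
        rw [cexp2]
        field_simp
        rw [mul_comm (x:ℂ) 2]
        rw [show lagLc k (-(2 * a)) = lagLc k (-2 * a) from congrArg _ (by ring)]
        linear_combination lagLc n (2*(x:ℂ)) * heval
      rw [hgoal, hqe, Finset.mul_sum]
      apply Finset.sum_congr rfl
      intro j _
      push_cast
      ring
    have hFint : IntegrableOn
        (fun x : ℝ => (lagPhi n x : ℂ) * (lagPhi k x : ℂ) / (a + (x:ℂ))) (Ioi 0) := by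
      refine (int_poly_exp_div a ha (lagPR n * lagPR k)).congr_fun (fun x _ => ?_)
        measurableSet_Ioi
      unfold lagPhi
      dsimp only
      rw [Polynomial.eval_mul, lagPR_eval, lagPR_eval, exp2]
      push_cast
      ring
    have hGint : IntegrableOn
        (fun x : ℝ => Complex.exp (-(x:ℂ)) / (a + (x:ℂ)) ^ 1 * (lagPhi n x : ℂ)
          * lagLc k (-2 * a)) (Ioi 0) := by
      have hbase : IntegrableOn
          (fun x : ℝ => ((Polynomial.eval x (lagPR n) * Real.exp (-(2*x)) : ℝ) : ℂ)
            / (a + (x:ℂ)) * lagLc k (-2 * a)) (Ioi 0) :=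
        (int_poly_exp_div a ha (lagPR n)).mul_const (lagLc k (-2 * a))
      refine hbase.congr_fun (fun x _ => ?_) measurableSet_Ioi
      unfold lagPhi
      dsimp only
      rw [lagPR_eval, exp2, pow_one, cexp]
      push_cast
      ring
    have hterm : ∀ j ∈ Finset.range n, IntegrableOn
        (fun x : ℝ => q.coeff j * ((lagL n (2*x) * x^j * Real.exp (-(2*x)) : ℝ) : ℂ))
        (Ioi 0) := by
      intro j _
      refine Integrable.const_mul ?_ _
      have hbase : IntegrableOn
          (fun x : ℝ => ((Polynomial.eval x (lagPR n * Polynomial.X ^ j)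
            * Real.exp (-(2*x)) : ℝ) : ℂ)) (Ioi 0) :=
        (int_poly_exp (lagPR n * Polynomial.X ^ j)).ofReal
      refine hbase.congr_fun (fun x _ => ?_) measurableSet_Ioi
      dsimp only
      rw [Polynomial.eval_mul, lagPR_eval, Polynomial.eval_pow, Polynomial.eval_X]
    have hsub : ∫ x in Ioi (0:ℝ),
        ((lagPhi n x : ℂ) * (lagPhi k x : ℂ) / (a + (x:ℂ))
          - Complex.exp (-(x:ℂ)) / (a + (x:ℂ)) ^ 1 * (lagPhi n x : ℂ) * lagLc k (-2 * a))
        = 0 := by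
      rw [setIntegral_congr_fun measurableSet_Ioi key,
        integral_finset_sum _ hterm]
      apply Finset.sum_eq_zero
      intro j hj
      have hcoe : ∫ x in Ioi (0:ℝ), ((lagL n (2*x) * x^j * Real.exp (-(2*x)) : ℝ) : ℂ)
          = ((∫ x in Ioi (0:ℝ), lagL n (2*x) * x^j * Real.exp (-(2*x)) : ℝ) : ℂ) :=
        integral_ofReal
      rw [MeasureTheory.integral_const_mul, hcoe,
        orth n j (Finset.mem_range.mp hj), Complex.ofReal_zero, mul_zero]
    rw [MeasureTheory.integral_sub hFint hGint] at hsub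
    have := sub_eq_zero.mp hsub
    unfold lagBeta lagAlpha
    rw [← MeasureTheory.integral_mul_const]
    exact this
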